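/- Let i ≥ 1 and let (a_0, …, a_{2i−1}) be a d_i-sequence in direction r starting at a_0 ∈ M(p₁,p₂,q). Assume that for each m ∈ {0, …, 2i−1} there exists a'_m ∈ M with a_m = ds(a'_m), and that there exists b_0 ∈ M(p₁,p₂,q−1) with d0(b_0) = a_0. Assume further that the complex is d0-exact at each of the positions (p₁+m, p₂) for m = 1, …, i−1. Then there exists a d_i-sequence (c_0, …, c_{2i−1}) in direction r starting at ds(b_0) ∈ M(p₁,p₂+1,q−1), and an element b_{2i−1} ∈ M(p₁+i,p₂,q−i) such that d0(b_{2i−1}) = a_{2i−1} and ds(b_{2i−1}) = c_{2i−1}. -/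

import Mathlib

/-- The triple complex (given by a family of submodules `M p₁ p₂ q` of an ambient module `V`,
with pairwise anticommuting differentials `d0`, `dr`, `ds`) is `d0`-exact at position
`(p₁', p₂')`: every `d0`-cycle in `M p₁' p₂' q'` is a `d0`-boundary of an element of
`M p₁' p₂' (q'-1)`. -/
def D0Exact3 {R V : Type*} [Ring R] [AddCommGroup V] [Module R V]
    (M : ℤ → ℤ → ℤ → Submodule R V) (d0 : V →ₗ[R] V) (p₁ p₂ : ℤ) : Prop :=
  ∀ q' : ℤ, ∀ x ∈ M p₁ p₂ q', d0 x = 0 → ∃ y ∈ M p₁ p₂ (q' - 1), d0 y = x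

/-- A `d_i`-sequence in direction `r` starting at `a ∈ M p₁ p₂ q`, encoded by its even part
`ae` (with `a_{2m} = ae m ∈ M (p₁+m) p₂ (q-m)`) and its odd part `ao`
(with `a_{2m+1} = ao m ∈ M (p₁+m+1) p₂ (q-m)`), satisfying `a_0 = a`,
`dr (a_{2m}) = a_{2m+1}` for `0 ≤ m ≤ i-1` and `d0 (a_{2m+2}) = a_{2m+1}` for
`0 ≤ m ≤ i-2`. -/
def IsDSeqR {R V : Type*} [Ring R] [AddCommGroup V] [Module R V]
    (M : ℤ → ℤ → ℤ → Submodule R V) (d0 dr : V →ₗ[R] V)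
    (p₁ p₂ q : ℤ) (i : ℕ) (a : V) (ae ao : ℕ → V) : Prop :=
  ae 0 = a ∧
  (∀ m : ℕ, m < i → ae m ∈ M (p₁ + m) p₂ (q - m)) ∧
  (∀ m : ℕ, m < i → ao m ∈ M (p₁ + m + 1) p₂ (q - m)) ∧
  (∀ m : ℕ, m < i → dr (ae m) = ao m) ∧
  (∀ m : ℕ, m + 1 < i → d0 (ae (m + 1)) = ao m)

/-- A `d_j`-sequence in direction `s` starting at `a ∈ M p₁ p₂ q`; defined analogously to
`IsDSeqR` with `ds` in place of `dr` and the second index in place of the first. -/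
def IsDSeqS {R V : Type*} [Ring R] [AddCommGroup V] [Module R V]
    (M : ℤ → ℤ → ℤ → Submodule R V) (d0 ds : V →ₗ[R] V)
    (p₁ p₂ q : ℤ) (j : ℕ) (a : V) (ae ao : ℕ → V) : Prop :=
  ae 0 = a ∧
  (∀ m : ℕ, m < j → ae m ∈ M p₁ (p₂ + m) (q - m)) ∧
  (∀ m : ℕ, m < j → ao m ∈ M p₁ (p₂ + m + 1) (q - m)) ∧
  (∀ m : ℕ, m < j → ds (ae m) = ao m) ∧
  (∀ m : ℕ, m + 1 < j → d0 (ae (m + 1)) = ao m)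

open Classical in
/-- Auxiliary recursive construction for `dseq_two_step_push_forward`. -/
noncomputable def pushSeqAux {R V : Type*} [Ring R] [AddCommGroup V] [Module R V]
    (M : ℤ → ℤ → ℤ → Submodule R V) (d0 dr : V →ₗ[R] V) (p₁ p₂ q : ℤ)
    (ae : ℕ → V) (b₀ : V) : ℕ → V
  | 0 => b₀
  | m + 1 =>
      if h : ∃ y ∈ M (p₁ + ((m + 1 : ℕ) : ℤ)) p₂ (q - ((m + 1 : ℕ) : ℤ) - 1),
          d0 y = ae (m + 1) + dr (pushSeqAux M d0 dr p₁ p₂ q ae b₀ m)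
      then h.choose else 0

/-- Lemma 3.5 of the paper (two-step push forward): let `(a_0, …, a_{2i-1})` be a
`d_i`-sequence in direction `r` starting at `a_0 ∈ M p₁ p₂ q`, with each `a_m` in the image
of `ds`, and with `a_0 = d0 b₀` for some `b₀ ∈ M p₁ p₂ (q-1)`. If the complex is `d0`-exact
at the positions `(p₁+m, p₂)` for `m = 1, …, i-1`, then there is a `d_i`-sequence
`(c_0, …, c_{2i-1})` in direction `r` starting at `ds b₀ ∈ M p₁ (p₂+1) (q-1)` and an
element `b_{2i-1} ∈ M (p₁+i) p₂ (q-i)` with `d0 b_{2i-1} = a_{2i-1}` and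
`ds b_{2i-1} = c_{2i-1}`. -/
theorem dseq_two_step_push_forward
    {R V : Type*} [Ring R] [AddCommGroup V] [Module R V]
    (M : ℤ → ℤ → ℤ → Submodule R V) (d0 dr ds : V →ₗ[R] V)
    (hm0 : ∀ p₁ p₂ q : ℤ, ∀ x ∈ M p₁ p₂ q, d0 x ∈ M p₁ p₂ (q + 1))
    (hmr : ∀ p₁ p₂ q : ℤ, ∀ x ∈ M p₁ p₂ q, dr x ∈ M (p₁ + 1) p₂ q)
    (hms : ∀ p₁ p₂ q : ℤ, ∀ x ∈ M p₁ p₂ q, ds x ∈ M p₁ (p₂ + 1) q)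
    (h00 : ∀ x : V, d0 (d0 x) = 0)
    (hrr : ∀ x : V, dr (dr x) = 0)
    (hss : ∀ x : V, ds (ds x) = 0)
    (h0r : ∀ x : V, d0 (dr x) + dr (d0 x) = 0)
    (h0s : ∀ x : V, d0 (ds x) + ds (d0 x) = 0)
    (hrs : ∀ x : V, dr (ds x) + ds (dr x) = 0)
    (p₁ p₂ q : ℤ) (i : ℕ) (hi : 1 ≤ i)
    (a₀ : V) (ha₀ : a₀ ∈ M p₁ p₂ q)
    (ae ao : ℕ → V) (hseq : IsDSeqR M d0 dr p₁ p₂ q i a₀ ae ao)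
    (hlift : ∀ m : ℕ, m < i → (∃ x : V, ae m = ds x) ∧ (∃ x : V, ao m = ds x))
    (b₀ : V) (hb₀ : b₀ ∈ M p₁ p₂ (q - 1)) (hdb₀ : d0 b₀ = a₀)
    (hexact : ∀ m : ℕ, 1 ≤ m → m < i → D0Exact3 M d0 (p₁ + m) p₂) :
    ∃ ce co : ℕ → V, ∃ b' : V,
      IsDSeqR M d0 dr p₁ (p₂ + 1) (q - 1) i (ds b₀) ce co ∧
      b' ∈ M (p₁ + i) p₂ (q - i) ∧ d0 b' = ao (i - 1) ∧ ds b' = co (i - 1) := by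
  
  classical
  obtain ⟨hae0, haeM, haoM, hdrae, hd0ae⟩ := hseq
  set be : ℕ → V := pushSeqAux M d0 dr p₁ p₂ q ae b₀ with hbe
  have hbe0 : be 0 = b₀ := rfl
  have h0rn : ∀ x : V, d0 (dr x) = - dr (d0 x) := fun x => eq_neg_of_add_eq_zero_left (h0r x)
  have h0sn : ∀ x : V, d0 (ds x) = - ds (d0 x) := fun x => eq_neg_of_add_eq_zero_left (h0s x)
  have hrsn : ∀ x : V, ds (dr x) = - dr (ds x) := fun x =>
    eq_neg_of_add_eq_zero_left (by rw [add_comm]; exact hrs x)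
  have key : ∀ m : ℕ, m < i →
      be m ∈ M (p₁ + (m : ℤ)) p₂ (q - 1 - (m : ℤ)) ∧ dr (d0 (be m)) = ao m ∧
      (∀ k : ℕ, m = k + 1 → d0 (be m) = ae m + dr (be k)) := by
    intro m
    induction m with
    | zero =>
      intro h0
      refine ⟨by simpa [hbe0] using hb₀, ?_, by intro k hk; omega⟩
      rw [hbe0, hdb₀, ← hae0]
      exact hdrae 0 h0
    | succ m ih =>
      intro hlt
      have hmlt : m < i := by omega
      obtain ⟨ihM, ihdr, -⟩ := ih hmlt
      have hxM : (ae (m + 1) + dr (be m)) ∈ M (p₁ + ((m + 1 : ℕ) : ℤ)) p₂ (q - ((m + 1 : ℕ) : ℤ)) := by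
        apply Submodule.add_mem
        · exact haeM (m + 1) hlt
        · have h1 := hmr _ _ _ _ ihM
          have e1 : p₁ + (m : ℤ) + 1 = p₁ + ((m + 1 : ℕ) : ℤ) := by push_cast; ring
          have e2 : q - 1 - (m : ℤ) = q - ((m + 1 : ℕ) : ℤ) := by push_cast; ring
          rwa [e1, e2] at h1
      have hx0 : d0 (ae (m + 1) + dr (be m)) = 0 := by
        rw [map_add, hd0ae m hlt, h0rn, ihdr]
        abel
      have hex : ∃ y ∈ M (p₁ + ((m + 1 : ℕ) : ℤ)) p₂ (q - ((m + 1 : ℕ) : ℤ) - 1),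
          d0 y = ae (m + 1) + dr (be m) :=
        hexact (m + 1) (by omega) hlt (q - ((m + 1 : ℕ) : ℤ)) _ hxM hx0
      have hbes : be (m + 1) = hex.choose := by
        have hstep : be (m + 1) = if h : ∃ y ∈ M (p₁ + ((m + 1 : ℕ) : ℤ)) p₂
            (q - ((m + 1 : ℕ) : ℤ) - 1), d0 y = ae (m + 1) + dr (be m)
            then h.choose else 0 := rfl
        rw [hstep, dif_pos hex]
      obtain ⟨yM, yd⟩ := hex.choose_spec
      rw [← hbes] at yM yd
      refine ⟨?_, ?_, ?_⟩
      · have e2 : q - ((m + 1 : ℕ) : ℤ) - 1 = q - 1 - ((m + 1 : ℕ) : ℤ) := by ring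
        rwa [e2] at yM
      · rw [yd, map_add, hdrae (m + 1) hlt, hrr]
        abel
      · intro k hk
        obtain rfl : k = m := by omega
        exact yd
  refine ⟨fun m => ds (be m), fun m => dr (ds (be m)), -(dr (be (i - 1))), ⟨rfl, ?_, ?_, fun m _ => rfl, ?_⟩, ?_, ?_, ?_⟩
  · intro m hm
    exact hms _ _ _ _ (key m hm).1
  · intro m hm
    exact hmr _ _ _ _ (hms _ _ _ _ (key m hm).1)
  · intro m hm
    have hd : d0 (be (m + 1)) = ae (m + 1) + dr (be m) := (key (m + 1) hm).2.2 m rfl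
    obtain ⟨x, hx⟩ := (hlift (m + 1) hm).1
    rw [h0sn, hd, map_add, hx, hss, hrsn]
    abel
  · have hM := hmr _ _ _ _ (key (i - 1) (by omega)).1
    have e1 : p₁ + ((i - 1 : ℕ) : ℤ) + 1 = p₁ + (i : ℤ) := by
      have : ((i - 1 : ℕ) : ℤ) = (i : ℤ) - 1 := by omega
      rw [this]; ring
    have e2 : q - 1 - ((i - 1 : ℕ) : ℤ) = q - (i : ℤ) := by
      have : ((i - 1 : ℕ) : ℤ) = (i : ℤ) - 1 := by omega
      rw [this]; ring
    rw [e1, e2] at hM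
    exact Submodule.neg_mem _ hM
  · rw [map_neg, h0rn, neg_neg, (key (i - 1) (by omega)).2.1]
  · rw [map_neg, hrsn, neg_neg]
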